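/- Let X and Y be racks. Suppose there exist four distinct elements y₁, y₂, y₃, y₄ ∈ Y with yᵢ ▷ y_j = y_j for all i, j, and elements x₁, x₂, x₃, x₄ ∈ X with xᵢ ▷ x_j ≠ x_j for all i ≠ j. Then the product rack X × Y is of type F. -/
import Mathlib


open Quandles

/-- The product of two racks, with componentwise operation. -/
instance Rack.prod (X Y : Type*) [Rack X] [Rack Y] : Rack (X × Y) where
  act p q := (p.1 ◃ q.1, p.2 ◃ q.2)
  self_distrib := by
    intro p q r
    exact Prod.ext Shelf.self_distrib Shelf.self_distrib
  invAct p q := (p.1 ◃⁻¹ q.1, p.2 ◃⁻¹ q.2)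
  left_inv p q := Prod.ext (Rack.left_inv p.1 q.1) (Rack.left_inv p.2 q.2)
  right_inv p q := Prod.ext (Rack.right_inv p.1 q.1) (Rack.right_inv p.2 q.2)

/-- A subset of a rack is a subrack if it is closed under the rack operation. -/
def IsSubrack {Z : Type*} [Rack Z] (R : Set Z) : Prop :=
  ∀ x ∈ R, ∀ y ∈ R, x ◃ y ∈ R

/-- A rack `Z` is of type F if it has four pairwise disjoint subracks
`R₁, R₂, R₃, R₄` with `Rₐ ◃ R_b = R_b` for `a ≠ b`, and elements `rₐ ∈ Rₐ` with
`rₐ ◃ r_b ≠ r_b` for `a ≠ b`. -/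
def IsTypeF (Z : Type*) [Rack Z] : Prop :=
  ∃ R : Fin 4 → Set Z, (∀ a, IsSubrack (R a)) ∧
    (∀ a b, a ≠ b → Disjoint (R a) (R b)) ∧
    (∀ a b, a ≠ b → {z | ∃ x ∈ R a, ∃ y ∈ R b, z = x ◃ y} = R b) ∧
    ∃ r : Fin 4 → Z, (∀ a, r a ∈ R a) ∧ ∀ a b, a ≠ b → r a ◃ r b ≠ r b

/-- Let `X`, `Y` be racks.  If `Y` has four distinct elements `y₁, …, y₄` acting
trivially on each other and `X` has elements `x₁, …, x₄` with `xᵢ ◃ x_j ≠ x_j`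
for `i ≠ j`, then the product rack `X × Y` is of type F. -/
theorem stmt7 {X Y : Type*} [Rack X] [Rack Y]
    (y : Fin 4 → Y) (hyinj : Function.Injective y)
    (hy : ∀ i j, y i ◃ y j = y j)
    (x : Fin 4 → X) (hx : ∀ i j, i ≠ j → x i ◃ x j ≠ x j) :
    IsTypeF (X × Y) := by
  have hact : ∀ p q : X × Y, p ◃ q = (p.1 ◃ q.1, p.2 ◃ q.2) := fun p q => rfl
  refine ⟨fun a => {p | p.2 = y a}, ?_, ?_, ?_, fun a => (x a, y a), fun a => rfl, ?_⟩
  · intro a p hp q hq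
    simp only [Set.mem_setOf_eq] at *
    rw [hact, hp, hq, hy]
  · intro a b hab
    rw [Set.disjoint_left]
    intro p hp hq
    simp only [Set.mem_setOf_eq] at *
    exact hab (hyinj (hp ▸ hq))
  · intro a b _
    ext p
    simp only [Set.mem_setOf_eq]
    constructor
    · rintro ⟨u, hu, v, hv, rfl⟩
      rw [hact, hu, hv, hy]
    · intro hp
      refine ⟨(x a, y a), rfl, (x a ◃⁻¹ p.1, p.2), hp, ?_⟩
      rw [hact]
      rw [hp, hy, ← hp, Rack.right_inv]
  · intro a b hab h
    apply hx a b hab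
    exact congrArg Prod.fst h
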